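/- Let G be a Fano-plane-free 3-uniform hypergraph containing an edge e = {x_1, x_2, x_3}. Define the simple graph G_1 on the vertex set V(G) ∖ {x_1, x_2, x_3} whose edges are all pairs {y_1, y_2} such that {y_1, y_2, x_i} is an edge of G for every i ∈ {1,2,3}. Then G_1 contains no complete graph K_4. -/
import Mathlib
set_option maxHeartbeats 1000000
set_option maxRecDepth 10000


open Finset

variable {V : Type*}

/-- `H` is an `r`-uniform hypergraph: every edge is an `r`-element set. -/
def IsUniform (r : ℕ) (H : Finset (Finset V)) : Prop := ∀ e ∈ H, e.card = r

/-- The edge set of the Fano plane on `Fin 7` (vertices `1,…,7` renamed `0,…,6`). -/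
def fanoEdges : Finset (Finset (Fin 7)) :=
  {{0,1,2}, {2,3,4}, {4,5,0}, {0,6,3}, {1,6,4}, {2,6,5}, {1,3,5}}

/-- `G` contains a copy of the Fano plane: an injection of its vertices sending every
edge of the Fano plane to an edge of `G`. -/
def ContainsFano [DecidableEq V] (G : Finset (Finset V)) : Prop :=
  ∃ f : Fin 7 ↪ V, ∀ e ∈ fanoEdges, e.map f ∈ G

lemma rot3 {V : Type*} [DecidableEq V] (u v w : V) :
    ({w, u, v} : Finset V) = {u, v, w} := by
  ext z; simp; tauto

lemma card4 {V : Type*} [DecidableEq V] {T : Finset V} (h : T.card = 4) :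
    ∃ a b c d : V, a ≠ b ∧ a ≠ c ∧ a ≠ d ∧ b ≠ c ∧ b ≠ d ∧ c ≠ d ∧
      T = {a, b, c, d} := by
  obtain ⟨a, t, ha, rfl, ht⟩ := Finset.card_eq_succ.mp h
  obtain ⟨b, c, d, hbc, hbd, hcd, rfl⟩ := Finset.card_eq_three.mp ht
  simp only [Finset.mem_insert, Finset.mem_singleton, not_or] at ha
  exact ⟨a, b, c, d, ha.1, ha.2.1, ha.2.2, hbc, hbd, hcd, rfl⟩

theorem statement17 {V : Type*} [DecidableEq V] (G : Finset (Finset V))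
    (hunif : IsUniform 3 G) (hfree : ¬ ContainsFano G) (x₁ x₂ x₃ : V)
    (he : ({x₁, x₂, x₃} : Finset V) ∈ G) :
    ¬ ∃ T : Finset V, T.card = 4 ∧ (∀ y ∈ T, y ∉ ({x₁, x₂, x₃} : Finset V)) ∧
      ∀ y₁ ∈ T, ∀ y₂ ∈ T, y₁ ≠ y₂ →
        ({y₁, y₂, x₁} : Finset V) ∈ G ∧ ({y₁, y₂, x₂} : Finset V) ∈ G ∧
          ({y₁, y₂, x₃} : Finset V) ∈ G := by
  rintro ⟨T, hT4, hTx, hpair⟩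
  obtain ⟨a, b, c, d, hab, hac, had, hbc, hbd, hcd, rfl⟩ := card4 hT4
  have ha : a ∈ ({a, b, c, d} : Finset V) := by simp
  have hb : b ∈ ({a, b, c, d} : Finset V) := by simp
  have hc : c ∈ ({a, b, c, d} : Finset V) := by simp
  have hd : d ∈ ({a, b, c, d} : Finset V) := by simp
  have hax := hTx a ha
  have hbx := hTx b hb
  have hcx := hTx c hc
  have hdx := hTx d hd
  simp only [Finset.mem_insert, Finset.mem_singleton, not_or] at hax hbx hcx hdx
  have h3 : ({x₁, x₂, x₃} : Finset V).card = 3 := hunif _ he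
  have pair_le : ∀ u v : V, ({u, v} : Finset V).card ≤ 2 := fun u v =>
    (Finset.card_insert_le _ _).trans (by simp)
  have hx12 : x₁ ≠ x₂ := by
    rintro rfl
    have hsub : ({x₁, x₁, x₃} : Finset V) ⊆ {x₁, x₃} := by intro z hz; simp at hz ⊢; tauto
    have := (Finset.card_le_card hsub).trans (pair_le x₁ x₃); omega
  have hx13 : x₁ ≠ x₃ := by
    rintro rfl
    have hsub : ({x₁, x₂, x₁} : Finset V) ⊆ {x₁, x₂} := by intro z hz; simp at hz ⊢; tauto
    have := (Finset.card_le_card hsub).trans (pair_le x₁ x₂); omega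
  have hx23 : x₂ ≠ x₃ := by
    rintro rfl
    have hsub : ({x₁, x₂, x₂} : Finset V) ⊆ {x₁, x₂} := by intro z hz; simp at hz ⊢; tauto
    have := (Finset.card_le_card hsub).trans (pair_le x₁ x₂); omega
  apply hfree
  refine ⟨⟨![x₁, x₂, x₃, a, b, c, d], ?_⟩, ?_⟩
  · rw [← List.nodup_ofFn]
    simp only [List.ofFn_succ, Matrix.cons_val_zero, Matrix.cons_val_succ, List.ofFn_zero]
    simp only [List.nodup_cons, List.mem_cons, List.mem_singleton, List.not_mem_nil,
      not_or, List.nodup_nil]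
    refine ⟨?_, ?_, ?_, ?_, ?_, ?_, ?_⟩ <;> simp <;> tauto
  · intro e hee
    have hAB := (hpair a ha b hb hab).2.2
    have hBC := hpair b hb c hc hbc
    have hDA := (hpair d hd a ha (Ne.symm had)).1
    have hDB := (hpair d hd b hb (Ne.symm hbd)).2.1
    have hDC := (hpair d hd c hc (Ne.symm hcd)).2.2
    have hAC := (hpair a ha c hc hac).2.1
    fin_cases hee <;>
      simp only [Finset.map_insert, Finset.map_singleton, Function.Embedding.coeFn_mk,
        Matrix.cons_val_zero, Matrix.cons_val_one, Matrix.head_cons, Matrix.cons_val_two,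
        Matrix.tail_cons, Matrix.cons_val_three, Matrix.cons_val_four, Matrix.cons_val_succ]
    · exact he
    · rw [rot3]; exact hAB
    · exact hBC.1
    · rw [rot3]; exact hDA
    · rw [rot3]; exact hDB
    · rw [rot3]; exact hDC
    · rw [rot3]; exact hAC
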